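/- Let p be a prime, and let g ∈ H(ℚ_p) be the upper unitriangular 3×3 matrix with (1,2)-entry a, (2,3)-entry b, and (1,3)-entry α (a, b, α ∈ ℚ_p). Then [H(ℤ_p) : H(ℤ_p) ∩ H(ℤ_p)^g] = max{p^{−v(a)}, p^{−v(b)}, 1}, where v denotes the p-adic valuation. -/

import Mathlib

/-- The conjugate subgroup `A ^ g = g⁻¹ A g`. -/
def conjSubgroup {G : Type*} [Group G] (g : G) (A : Subgroup G) : Subgroup G :=
  A.map (MulAut.conj g⁻¹).toMonoidHom

/-- The Heisenberg group over a commutative ring `R`: the group of upper unitriangular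
`3 × 3` matrices `[[1, a, c], [0, 1, b], [0, 0, 1]]`, recorded by the triple `(a, b, c)`
of its above-diagonal entries (the `(1,2)`, `(2,3)` and `(1,3)` entries respectively). -/
@[ext]
structure Heisenberg (R : Type*) where
  a : R
  b : R
  c : R

namespace Heisenberg

variable {R : Type*} [CommRing R]

instance : Mul (Heisenberg R) := ⟨fun x y => ⟨x.a + y.a, x.b + y.b, x.c + y.c + x.a * y.b⟩⟩
instance : One (Heisenberg R) := ⟨⟨0, 0, 0⟩⟩
instance : Inv (Heisenberg R) := ⟨fun x => ⟨-x.a, -x.b, x.a * x.b - x.c⟩⟩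

@[simp] theorem mul_a (x y : Heisenberg R) : (x * y).a = x.a + y.a := rfl
@[simp] theorem mul_b (x y : Heisenberg R) : (x * y).b = x.b + y.b := rfl
@[simp] theorem mul_c (x y : Heisenberg R) : (x * y).c = x.c + y.c + x.a * y.b := rfl
@[simp] theorem one_a : (1 : Heisenberg R).a = 0 := rfl
@[simp] theorem one_b : (1 : Heisenberg R).b = 0 := rfl
@[simp] theorem one_c : (1 : Heisenberg R).c = 0 := rfl
@[simp] theorem inv_a (x : Heisenberg R) : x⁻¹.a = -x.a := rfl
@[simp] theorem inv_b (x : Heisenberg R) : x⁻¹.b = -x.b := rfl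
@[simp] theorem inv_c (x : Heisenberg R) : x⁻¹.c = x.a * x.b - x.c := rfl

instance : Group (Heisenberg R) where
  mul_assoc x y z := by ext <;> simp <;> ring
  one_mul x := by ext <;> simp
  mul_one x := by ext <;> simp
  inv_mul_cancel x := by ext <;> simp [mul_comm]

/-- The group homomorphism `H(R) → H(S)` induced by a ring homomorphism `R → S`. -/
def map {S : Type*} [CommRing S] (f : R →+* S) : Heisenberg R →* Heisenberg S where
  toFun x := ⟨f x.a, f x.b, f x.c⟩
  map_one' := by ext <;> simp
  map_mul' x y := by ext <;> simp

end Heisenberg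

/-- `H(ℤ_p)` as a subgroup of `H(ℚ_p)`: the image of the Heisenberg group over the
`p`-adic integers under the coefficient embedding `ℤ_p → ℚ_p`. -/
noncomputable def heisenbergInt (p : ℕ) [Fact p.Prime] : Subgroup (Heisenberg ℚ_[p]) :=
  (Heisenberg.map (PadicInt.Coe.ringHom (p := p))).range

section Aux

open PadicInt

variable {p : ℕ} [Fact p.Prime]

theorem norm_add_le_one {u v : ℚ_[p]} (hu : ‖u‖ ≤ 1) (hv : ‖v‖ ≤ 1) : ‖u + v‖ ≤ 1 :=
  le_trans (Padic.nonarchimedean u v) (max_le hu hv)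

theorem norm_of_add_le_one {u v : ℚ_[p]} (hu : ‖u‖ ≤ 1) (huv : ‖u + v‖ ≤ 1) : ‖v‖ ≤ 1 := by
  have : v = (u + v) - u := by ring
  rw [this, sub_eq_add_neg]
  exact norm_add_le_one huv (by simpa using hu)

/-- The subgroup of `H(ℤ_p)` cut out by the condition `‖x.a * b - a * x.b‖ ≤ 1`. -/
def Kgrp (a b : ℚ_[p]) : Subgroup (Heisenberg ℤ_[p]) where
  carrier := {x | ‖(x.a : ℚ_[p]) * b - a * (x.b : ℚ_[p])‖ ≤ 1}
  one_mem' := by simp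
  mul_mem' := by
    intro x y hx hy
    simp only [Set.mem_setOf_eq, Heisenberg.mul_a, Heisenberg.mul_b] at *
    have h : ((x.a + y.a : ℤ_[p]) : ℚ_[p]) * b - a * ((x.b + y.b : ℤ_[p]) : ℚ_[p])
        = ((x.a : ℚ_[p]) * b - a * x.b) + ((y.a : ℚ_[p]) * b - a * y.b) := by
      push_cast; ring
    rw [h]
    exact norm_add_le_one hx hy
  inv_mem' := by
    intro x hx
    simp only [Set.mem_setOf_eq, Heisenberg.inv_a, Heisenberg.inv_b] at *
    have h : ((-x.a : ℤ_[p]) : ℚ_[p]) * b - a * ((-x.b : ℤ_[p]) : ℚ_[p])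
        = -((x.a : ℚ_[p]) * b - a * x.b) := by push_cast; ring
    rw [h, norm_neg]
    exact hx

theorem mem_Kgrp {a b : ℚ_[p]} {x : Heisenberg ℤ_[p]} :
    x ∈ Kgrp a b ↔ ‖(x.a : ℚ_[p]) * b - a * (x.b : ℚ_[p])‖ ≤ 1 := Iff.rfl

/-- The homomorphism whose kernel is `Kgrp`. -/
noncomputable def psi (n : ℕ) (a' b' : ℤ_[p]) : Heisenberg ℤ_[p] →* Multiplicative (ZMod (p ^ n)) where
  toFun x := Multiplicative.ofAdd (toZModPow n (x.a * b' - a' * x.b))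
  map_one' := by
    simp only [Heisenberg.one_a, Heisenberg.one_b, zero_mul, mul_zero, sub_zero, map_zero]
    rfl
  map_mul' x y := by
    simp only [Heisenberg.mul_a, Heisenberg.mul_b, ← ofAdd_add]
    congr 1
    rw [← map_add]
    congr 1
    ring

theorem ker_psi (a b : ℚ_[p]) (n : ℕ) (a' b' : ℤ_[p])
    (ha' : (a' : ℚ_[p]) = (p : ℚ_[p]) ^ n * a) (hb' : (b' : ℚ_[p]) = (p : ℚ_[p]) ^ n * b) :
    (psi n a' b').ker = Kgrp a b := by
  ext x
  have hp1 : (0:ℝ) < (p:ℝ) ^ (-n : ℤ) :=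
    zpow_pos (by exact_mod_cast (Fact.out : p.Prime).pos) _
  have key : ((x.a * b' - a' * x.b : ℤ_[p]) : ℚ_[p])
      = (p : ℚ_[p]) ^ n * ((x.a : ℚ_[p]) * b - a * (x.b : ℚ_[p])) := by
    push_cast
    rw [ha', hb']
    ring
  constructor
  · intro hx
    have h0 : toZModPow n (x.a * b' - a' * x.b) = 0 := by
      have := hx
      rwa [MonoidHom.mem_ker] at this
    have hmem : (x.a * b' - a' * x.b) ∈ Ideal.span {(p : ℤ_[p]) ^ n} := by
      rw [← ker_toZModPow]; exact h0
    have hle : ‖x.a * b' - a' * x.b‖ ≤ (p:ℝ) ^ (-n : ℤ) :=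
      (norm_le_pow_iff_mem_span_pow _ n).mpr hmem
    rw [norm_def, key, norm_mul, Padic.norm_p_pow] at hle
    rw [mem_Kgrp]
    exact (mul_le_mul_iff_right₀ hp1).mp (by simpa using hle)
  · intro hx
    rw [mem_Kgrp] at hx
    have hle : ‖x.a * b' - a' * x.b‖ ≤ (p:ℝ) ^ (-n : ℤ) := by
      rw [norm_def, key, norm_mul, Padic.norm_p_pow]
      calc (p:ℝ) ^ (-n:ℤ) * ‖(x.a : ℚ_[p]) * b - a * (x.b : ℚ_[p])‖
          ≤ (p:ℝ) ^ (-n:ℤ) * 1 := mul_le_mul_of_nonneg_left hx (le_of_lt hp1)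
        _ = (p:ℝ) ^ (-n:ℤ) := mul_one _
    have hmem := (norm_le_pow_iff_mem_span_pow _ n).mp hle
    rw [← ker_toZModPow] at hmem
    rw [MonoidHom.mem_ker]
    show Multiplicative.ofAdd (toZModPow n (x.a * b' - a' * x.b)) = 1
    rw [show toZModPow n (x.a * b' - a' * x.b) = 0 from hmem]
    rfl

theorem Kgrp_index (a b : ℚ_[p]) (n : ℕ) (a' b' : ℤ_[p])
    (ha' : (a' : ℚ_[p]) = (p : ℚ_[p]) ^ n * a) (hb' : (b' : ℚ_[p]) = (p : ℚ_[p]) ^ n * b)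
    (h1 : n = 0 ∨ ‖a'‖ = 1 ∨ ‖b'‖ = 1) :
    (Kgrp a b).index = p ^ n := by
  have hsurj : Function.Surjective (psi n a' b') := by
    haveI : NeZero (p ^ n) := ⟨pow_ne_zero n (Fact.out : p.Prime).ne_zero⟩
    intro t
    obtain ⟨m, hm⟩ := ZMod.natCast_zmod_surjective (n := p ^ n) t.toAdd
    rcases h1 with h0 | hu | hu
    · subst h0
      refine ⟨1, ?_⟩
      have : Subsingleton (ZMod (p ^ 0)) := by rw [pow_zero]; infer_instance
      exact (Multiplicative.toAdd).injective (Subsingleton.elim _ _)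
    · obtain ⟨u, hu⟩ := isUnit_iff.mpr hu
      refine ⟨⟨0, -((↑u⁻¹ : ℤ_[p]) * (m : ℤ_[p])), 0⟩, ?_⟩
      show Multiplicative.ofAdd (toZModPow n ((0:ℤ_[p]) * b' - a' * (-((↑u⁻¹ : ℤ_[p]) * (m : ℤ_[p]))))) = t
      have : (0:ℤ_[p]) * b' - a' * (-((↑u⁻¹ : ℤ_[p]) * (m : ℤ_[p]))) = (m : ℤ_[p]) * ((↑u⁻¹ : ℤ_[p]) * ↑u) := by
        rw [hu]; ring
      rw [this, Units.inv_mul, mul_one, map_natCast, hm]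
      rfl
    · obtain ⟨u, hu⟩ := isUnit_iff.mpr hu
      refine ⟨⟨(↑u⁻¹ : ℤ_[p]) * (m : ℤ_[p]), 0, 0⟩, ?_⟩
      show Multiplicative.ofAdd (toZModPow n (((↑u⁻¹ : ℤ_[p]) * (m : ℤ_[p])) * b' - a' * 0)) = t
      have : ((↑u⁻¹ : ℤ_[p]) * (m : ℤ_[p])) * b' - a' * 0 = (m : ℤ_[p]) * ((↑u⁻¹ : ℤ_[p]) * ↑u) := by
        rw [hu]; ring
      rw [this, Units.inv_mul, mul_one, map_natCast, hm]
      rfl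
  rw [← ker_psi a b n a' b' ha' hb', Subgroup.index_ker,
    MonoidHom.range_eq_top.mpr hsurj, Subgroup.card_top]
  show Nat.card (ZMod (p ^ n)) = p ^ n
  exact Nat.card_zmod _

end Aux

section Aux2

open PadicInt

variable {p : ℕ} [Fact p.Prime]

@[simp] theorem Heisenberg.map_a {R S : Type*} [CommRing R] [CommRing S] (f : R →+* S)
    (x : Heisenberg R) : (Heisenberg.map f x).a = f x.a := rfl
@[simp] theorem Heisenberg.map_b {R S : Type*} [CommRing R] [CommRing S] (f : R →+* S)
    (x : Heisenberg R) : (Heisenberg.map f x).b = f x.b := rfl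
@[simp] theorem Heisenberg.map_c {R S : Type*} [CommRing R] [CommRing S] (f : R →+* S)
    (x : Heisenberg R) : (Heisenberg.map f x).c = f x.c := rfl

@[simp] theorem coeRingHom_apply (x : ℤ_[p]) :
    PadicInt.Coe.ringHom (p := p) x = (x : ℚ_[p]) := rfl

theorem conj_entries (a b α : ℚ_[p]) (z : Heisenberg ℚ_[p]) :
    (⟨a, b, α⟩ : Heisenberg ℚ_[p]) * z * (⟨a, b, α⟩ : Heisenberg ℚ_[p])⁻¹
      = ⟨z.a, z.b, z.c + a * z.b - z.a * b⟩ := by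
  ext <;> simp <;> ring

theorem mem_heisenbergInt {y : Heisenberg ℚ_[p]} :
    y ∈ heisenbergInt p ↔ ‖y.a‖ ≤ 1 ∧ ‖y.b‖ ≤ 1 ∧ ‖y.c‖ ≤ 1 := by
  constructor
  · rintro ⟨w, rfl⟩
    exact ⟨w.a.2, w.b.2, w.c.2⟩
  · rintro ⟨h1, h2, h3⟩
    exact ⟨⟨⟨y.a, h1⟩, ⟨y.b, h2⟩, ⟨y.c, h3⟩⟩, by ext <;> rfl⟩

theorem comap_conj_eq (a b α : ℚ_[p]) :
    (conjSubgroup (⟨a, b, α⟩ : Heisenberg ℚ_[p]) (heisenbergInt p)).comap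
        (Heisenberg.map (PadicInt.Coe.ringHom (p := p))) = Kgrp a b := by
  ext x
  simp only [Subgroup.mem_comap, mem_Kgrp]
  set g : Heisenberg ℚ_[p] := (⟨a, b, α⟩ : Heisenberg ℚ_[p]) with hg
  set z : Heisenberg ℚ_[p] := Heisenberg.map (PadicInt.Coe.ringHom (p := p)) x with hz
  have hswap : ‖(x.a : ℚ_[p]) * b - a * (x.b : ℚ_[p])‖
      = ‖a * (x.b : ℚ_[p]) - (x.a : ℚ_[p]) * b‖ := by
    rw [← norm_neg]; congr 1; ring
  constructor
  · intro hx
    rw [conjSubgroup, Subgroup.mem_map] at hx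
    obtain ⟨y, hy, hyx⟩ := hx
    have hyx' : g⁻¹ * y * g = z := by
      simpa [MulAut.conj_apply] using hyx
    have hy' : y = g * z * g⁻¹ := by rw [← hyx']; group
    rw [hy', hg, conj_entries] at hy
    rw [mem_heisenbergInt] at hy
    obtain ⟨-, -, h3⟩ := hy
    simp only [hz] at h3
    have hc : ‖(x.c : ℚ_[p]) + (a * (x.b : ℚ_[p]) - (x.a : ℚ_[p]) * b)‖ ≤ 1 := by
      have h : (x.c : ℚ_[p]) + (a * (x.b : ℚ_[p]) - (x.a : ℚ_[p]) * b)
          = (Heisenberg.map (PadicInt.Coe.ringHom (p := p)) x).c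
            + a * (Heisenberg.map (PadicInt.Coe.ringHom (p := p)) x).b
            - (Heisenberg.map (PadicInt.Coe.ringHom (p := p)) x).a * b := by
        simp only [Heisenberg.map_a, Heisenberg.map_b, Heisenberg.map_c, coeRingHom_apply]; ring
      rw [h]; exact h3
    rw [hswap]
    exact norm_of_add_le_one x.c.2 hc
  · intro hx
    rw [conjSubgroup, Subgroup.mem_map]
    refine ⟨g * z * g⁻¹, ?_, ?_⟩
    · rw [hg, conj_entries, mem_heisenbergInt]
      refine ⟨by simpa [hz] using x.a.2,
        by simpa [hz] using x.b.2, ?_⟩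
      have h : (z.c + a * z.b - z.a * b)
          = (x.c : ℚ_[p]) + (a * (x.b : ℚ_[p]) - (x.a : ℚ_[p]) * b) := by
        simp only [hz, Heisenberg.map_a, Heisenberg.map_b, Heisenberg.map_c, coeRingHom_apply]; ring
      show ‖z.c + a * z.b - z.a * b‖ ≤ 1
      rw [h]
      exact norm_add_le_one x.c.2 (by rw [← hswap]; exact hx)
    · show (MulAut.conj g⁻¹) (g * z * g⁻¹) = z
      simp [MulAut.conj_apply]
      group

end Aux2

/-- **Heisenberg index computation.** Let `p` be a prime and let
`g = [[1, a, α], [0, 1, b], [0, 0, 1]] ∈ H(ℚ_p)`. Then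
`[H(ℤ_p) : H(ℤ_p) ∩ H(ℤ_p)^g] = max {p^{-v(a)}, p^{-v(b)}, 1}`, where `v` is the `p`-adic
valuation; note that `p^{-v(x)} = ‖x‖` is exactly the `p`-adic norm of `x`.
(`Subgroup.relindex` takes the value `0` for an infinite index.) -/
theorem heisenberg_relindex_conj (p : ℕ) [Fact p.Prime] (a b α : ℚ_[p]) :
    ((conjSubgroup (⟨a, b, α⟩ : Heisenberg ℚ_[p]) (heisenbergInt p)).relIndex
        (heisenbergInt p) : ℝ) = max (max ‖a‖ ‖b‖) 1 := by
  have hp : p.Prime := Fact.out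
  have hpR : (1:ℝ) < p := by exact_mod_cast hp.one_lt
  have hp0 : (0:ℝ) < p := lt_trans one_pos hpR
  set m : ℤ := max (max (-a.valuation) (-b.valuation)) 0 with hm
  set n : ℕ := m.toNat with hn
  have hm0 : 0 ≤ m := le_max_right _ _
  have hmn : (n : ℤ) = m := Int.toNat_of_nonneg hm0
  have hnorm_le : ∀ x : ℚ_[p], -x.valuation ≤ m → ‖x‖ ≤ (p:ℝ) ^ (n:ℤ) := by
    intro x hx
    by_cases h0 : x = 0
    · rw [h0, norm_zero]; positivity
    · rw [Padic.norm_eq_zpow_neg_valuation h0]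
      exact zpow_le_zpow_right₀ hpR.le (by rw [hmn]; exact hx)
  have ha_le : ‖a‖ ≤ (p:ℝ)^(n:ℤ) := hnorm_le a ((le_max_left _ _).trans (le_max_left _ _))
  have hb_le : ‖b‖ ≤ (p:ℝ)^(n:ℤ) := hnorm_le b ((le_max_right _ _).trans (le_max_left _ _))
  have hppow : ‖((p:ℚ_[p])^n)‖ = (p:ℝ)^(-n:ℤ) := Padic.norm_p_pow n
  have hcancel : (p:ℝ)^(-n:ℤ) * (p:ℝ)^(n:ℤ) = 1 := by
    rw [← zpow_add₀ (ne_of_gt hp0)]; simp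
  have hintle : ∀ x : ℚ_[p], ‖x‖ ≤ (p:ℝ)^(n:ℤ) → ‖(p:ℚ_[p])^n * x‖ ≤ 1 := by
    intro x hx
    rw [norm_mul, hppow, ← hcancel]
    exact mul_le_mul_of_nonneg_left hx (by positivity)
  set a' : ℤ_[p] := ⟨(p:ℚ_[p])^n * a, hintle a ha_le⟩ with ha'
  set b' : ℤ_[p] := ⟨(p:ℚ_[p])^n * b, hintle b hb_le⟩ with hb'
  have hval : n ≠ 0 → ‖a‖ = (p:ℝ)^(n:ℤ) ∨ ‖b‖ = (p:ℝ)^(n:ℤ) := by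
    intro hn0
    have hmpos : m ≠ 0 := by
      intro h
      exact hn0 (by rw [hn, h]; rfl)
    have hmax : m = -a.valuation ∨ m = -b.valuation := by
      rcases max_choice (max (-a.valuation) (-b.valuation)) 0 with h | h
      · rw [hm, h]; exact max_choice _ _
      · exact absurd (hm.trans h) hmpos
    have key : ∀ x : ℚ_[p], m = -x.valuation → ‖x‖ = (p:ℝ)^(n:ℤ) := by
      intro x hx
      have hx0 : x ≠ 0 := by
        intro h
        rw [h, Padic.valuation_zero, neg_zero] at hx
        exact hmpos hx
      rw [Padic.norm_eq_zpow_neg_valuation hx0, ← hx, hmn]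
    rcases hmax with h | h
    · exact Or.inl (key a h)
    · exact Or.inr (key b h)
  have h1 : n = 0 ∨ ‖a'‖ = 1 ∨ ‖b'‖ = 1 := by
    by_cases hn0 : n = 0
    · exact Or.inl hn0
    · rcases hval hn0 with h | h
      · refine Or.inr (Or.inl ?_)
        show ‖(p:ℚ_[p])^n * a‖ = 1
        rw [norm_mul, hppow, h, hcancel]
      · refine Or.inr (Or.inr ?_)
        show ‖(p:ℚ_[p])^n * b‖ = 1
        rw [norm_mul, hppow, h, hcancel]
  have h1n : (1:ℝ) ≤ (p:ℝ)^(n:ℤ) := by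
    rw [show (1:ℝ) = (p:ℝ)^(0:ℤ) by simp]
    exact zpow_le_zpow_right₀ hpR.le (by positivity)
  have hRHS : max (max ‖a‖ ‖b‖) 1 = (p:ℝ)^(n:ℤ) := by
    refine le_antisymm (max_le (max_le ha_le hb_le) h1n) ?_
    by_cases hn0 : n = 0
    · rw [show ((n:ℤ)) = 0 by rw [hn0]; rfl, zpow_zero]
      exact le_max_right _ _
    · rcases hval hn0 with h | h
      · exact h ▸ le_trans (le_max_left _ _) (le_max_left _ _)
      · exact h ▸ le_trans (le_max_right _ _) (le_max_left _ _)
  have hrel : (conjSubgroup (⟨a, b, α⟩ : Heisenberg ℚ_[p]) (heisenbergInt p)).relIndex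
      (heisenbergInt p) = (Kgrp a b).index := by
    rw [← comap_conj_eq a b α, Subgroup.index_comap]
    rfl
  rw [hrel, Kgrp_index a b n a' b' rfl rfl h1, hRHS]
  push_cast
  rw [zpow_natCast]
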